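/- Let α ≠ 0. Then Hom_{W(2,2)}(Ω(λ₁,α₁,h₁), Ω(λ₂,α₂,h₂)) is nonzero if and only if λ₁ = λ₂, α₁ = α₂, and h₁ = h₂; in that case every module homomorphism is a scalar multiple of the identity map on ℂ[s,t]. -/

import Mathlib

open Polynomial TensorProduct

/-- Basis index set for the W-algebra W(2,2): elements `L n`, `W n` (n ∈ ℤ) and a central `C`. -/
inductive WIdx : Type
  | L : ℤ → WIdx
  | W : ℤ → WIdx
  | C : WIdx

/-- The central-term coefficient δ_{m+n,0}·(m³−m)/12. -/
noncomputable def deltaC (m n : ℤ) : ℂ := if m + n = 0 then ((m : ℂ)^3 - (m : ℂ))/12 else 0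

/-- A representation of the W-algebra W(2,2) on a complex vector space `M`,
given by operators for each basis element satisfying the bracket relations. -/
structure WRep (M : Type*) [AddCommGroup M] [Module ℂ M] where
  ρ : WIdx → Module.End ℂ M
  rel_LL : ∀ m n : ℤ, ρ (.L m) * ρ (.L n) - ρ (.L n) * ρ (.L m)
      = ((n : ℂ) - (m : ℂ)) • ρ (.L (m + n)) + deltaC m n • ρ .C
  rel_LW : ∀ m n : ℤ, ρ (.L m) * ρ (.W n) - ρ (.W n) * ρ (.L m)
      = ((n : ℂ) - (m : ℂ)) • ρ (.W (m + n)) + deltaC m n • ρ .C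
  rel_WW : ∀ m n : ℤ, ρ (.W m) * ρ (.W n) = ρ (.W n) * ρ (.W m)
  rel_C : ∀ x, ρ .C * ρ x = ρ x * ρ .C

/-- A subspace invariant under all the operators of a representation. -/
def WInvariant {M : Type*} [AddCommGroup M] [Module ℂ M]
    (ρ : WIdx → Module.End ℂ M) (N : Submodule ℂ M) : Prop :=
  ∀ b : WIdx, ∀ x ∈ N, ρ b x ∈ N

/-- Simplicity: the module is nonzero and has no nonzero proper invariant subspaces. -/
def WSimple {M : Type*} [AddCommGroup M] [Module ℂ M]
    (ρ : WIdx → Module.End ℂ M) : Prop :=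
  (∃ x : M, x ≠ 0) ∧ ∀ N : Submodule ℂ M, WInvariant ρ N → N = ⊥ ∨ N = ⊤

/-- Module homomorphisms: linear maps intertwining the two actions. -/
def WHom {M N : Type*} [AddCommGroup M] [Module ℂ M] [AddCommGroup N] [Module ℂ N]
    (ρM : WIdx → Module.End ℂ M) (ρN : WIdx → Module.End ℂ N) (φ : M →ₗ[ℂ] N) : Prop :=
  ∀ b : WIdx, ∀ x : M, φ (ρM b x) = ρN b (φ x)

/-- Restricted module: every vector is killed by `L n` and `W n` for all sufficiently large `n`. -/
def WRestricted {M : Type*} [AddCommGroup M] [Module ℂ M]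
    (ρ : WIdx → Module.End ℂ M) : Prop :=
  ∀ x : M, ∃ N : ℤ, ∀ n : ℤ, N ≤ n → ρ (.L n) x = 0 ∧ ρ (.W n) x = 0

/-- The substitution operator f(s) ↦ f(s − n) on ℂ[s]. -/
noncomputable def shiftMap (n : ℤ) : Module.End ℂ (Polynomial ℂ) :=
  (Polynomial.aeval (Polynomial.X - Polynomial.C (n : ℂ))).toLinearMap

/-- The action of W(2,2) on Ω(λ,α) = ℂ[s]:
`L n · f(s) = λⁿ (s − nα) f(s − n)`, `W n` and `C` act by zero. -/
noncomputable def omegaRho (lam alpha : ℂ) : WIdx → Module.End ℂ (Polynomial ℂ)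
  | .L n => (lam ^ n) •
      ((LinearMap.mulLeft ℂ (Polynomial.X - Polynomial.C ((n : ℂ) * alpha))) ∘ₗ shiftMap n)
  | .W _ => 0
  | .C => 0

/-- g(t) = (h(t) − h(α))/(t − α) as an exact polynomial quotient. -/
noncomputable def gPoly (alpha : ℂ) (h : Polynomial ℂ) : Polynomial ℂ :=
  (h - Polynomial.C (h.eval alpha)) /ₘ (Polynomial.X - Polynomial.C alpha)

/-- F(f) = g·f − f′. -/
noncomputable def Fmap (alpha : ℂ) (h : Polynomial ℂ) : Module.End ℂ (Polynomial ℂ) :=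
  LinearMap.mulLeft ℂ (gPoly alpha h) - (Polynomial.derivative : Polynomial ℂ →ₗ[ℂ] Polynomial ℂ)

/-- G(f) = t·F(f) + h(α)·f. -/
noncomputable def Gmap (alpha : ℂ) (h : Polynomial ℂ) : Module.End ℂ (Polynomial ℂ) :=
  (LinearMap.mulLeft ℂ (Polynomial.X : Polynomial ℂ)) ∘ₗ Fmap alpha h
    + (h.eval alpha) • (LinearMap.id : Polynomial ℂ →ₗ[ℂ] Polynomial ℂ)

/-- The action of W(2,2) on Ω(λ,α,h) = ℂ[s,t], realized as ℂ[s] ⊗ ℂ[t]: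
`L n·(s^p t^q) = λⁿ(s−n)^p (s t^q + n G(t^q) − n²α F(t^q))`,
`W n·(s^p t^q) = λⁿ(t−nα)(s−n)^p t^q`, `C` acts by zero. -/
noncomputable def omegaHRho (lam alpha : ℂ) (h : Polynomial ℂ) :
    WIdx → Module.End ℂ (TensorProduct ℂ (Polynomial ℂ) (Polynomial ℂ))
  | .L n => (lam ^ n) •
      (TensorProduct.map ((LinearMap.mulLeft ℂ (Polynomial.X : Polynomial ℂ)) ∘ₗ shiftMap n) LinearMap.id
        + (n : ℂ) • TensorProduct.map (shiftMap n) (Gmap alpha h)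
        - ((n : ℂ)^2 * alpha) • TensorProduct.map (shiftMap n) (Fmap alpha h))
  | .W n => (lam ^ n) •
      TensorProduct.map (shiftMap n)
        (LinearMap.mulLeft ℂ (Polynomial.X - Polynomial.C ((n : ℂ) * alpha)))
  | .C => 0

open Polynomial TensorProduct
noncomputable section
abbrev PC := Polynomial ℂ
abbrev AA := TensorProduct ℂ (Polynomial ℂ) (Polynomial ℂ)

lemma shiftMap_zero : shiftMap 0 = LinearMap.id := by
  ext f : 1
  simp [shiftMap]

lemma shiftMap_one_eq (n : ℤ) : shiftMap n (1:PC) = 1 := by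
  simp [shiftMap]

lemma omegaHRho_L_zero (lam alpha : ℂ) (h : Polynomial ℂ) :
    omegaHRho lam alpha h (.L 0) = LinearMap.mulLeft ℂ ((X:PC) ⊗ₜ[ℂ] (1:PC)) := by
  apply TensorProduct.ext'
  intro f g
  simp [omegaHRho, shiftMap_zero, Algebra.TensorProduct.tmul_mul_tmul]

lemma omegaHRho_W_zero (lam alpha : ℂ) (h : Polynomial ℂ) :
    omegaHRho lam alpha h (.W 0) = LinearMap.mulLeft ℂ ((1:PC) ⊗ₜ[ℂ] (X:PC)) := by
  apply TensorProduct.ext'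
  intro f g
  simp [omegaHRho, shiftMap_zero, Algebra.TensorProduct.tmul_mul_tmul, mul_comm]

def EE : AA ≃ₐ[ℂ] Polynomial (Polynomial ℂ) :=
  (Algebra.TensorProduct.comm ℂ _ _).trans (polyEquivTensor ℂ (Polynomial ℂ)).symm

lemma EE_one_tmul (g : PC) : EE ((1 : PC) ⊗ₜ[ℂ] g) = C g := by
  simp only [EE, AlgEquiv.trans_apply, Algebra.TensorProduct.comm_tmul,
    polyEquivTensor_symm_apply_tmul]
  rw [show (1:PC) = C (1:ℂ) from rfl, sum_C_index] <;> simp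

lemma EE_X_tmul_one : EE ((X : PC) ⊗ₜ[ℂ] (1:PC)) = X := by
  simp only [EE, AlgEquiv.trans_apply, Algebra.TensorProduct.comm_tmul,
    polyEquivTensor_symm_apply_tmul]
  rw [sum_X_index] <;> simp [monomial_one_one_eq_X]

lemma map_shift_mulLeft (n : ℤ) (u : PC) :
    TensorProduct.map (shiftMap n) (LinearMap.mulLeft ℂ u)
      = LinearMap.mulLeft ℂ ((1:PC) ⊗ₜ[ℂ] u) ∘ₗ TensorProduct.map (shiftMap n) LinearMap.id := by
  apply TensorProduct.ext'
  intro f g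
  simp [Algebra.TensorProduct.tmul_mul_tmul]

lemma EE_shift (n : ℤ) (x : AA) :
    EE (TensorProduct.map (shiftMap n) LinearMap.id x)
      = (EE x).comp (X - C (C ((n:ℤ) : ℂ))) := by
  have hΦ : TensorProduct.map (shiftMap n) (LinearMap.id (R := ℂ) (M := PC))
      = (Algebra.TensorProduct.map (Polynomial.aeval (X - C ((n:ℤ):ℂ))) (AlgHom.id ℂ PC)).toLinearMap := by
    apply TensorProduct.ext'
    intro f g
    simp [shiftMap]
  have key : (EE.toAlgHom.comp
        (Algebra.TensorProduct.map (Polynomial.aeval (X - C ((n:ℤ):ℂ))) (AlgHom.id ℂ PC)))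
      = (((Polynomial.aeval (R := PC) (X - C (C ((n:ℤ):ℂ)))).restrictScalars ℂ).comp EE.toAlgHom) := by
    apply Algebra.TensorProduct.ext
    · apply Polynomial.algHom_ext
      simp only [AlgHom.comp_apply, Algebra.TensorProduct.includeLeft_apply,
        Algebra.TensorProduct.map_tmul, aeval_X, AlgHom.coe_id, id_eq,
        AlgHom.coe_restrictScalars', AlgEquiv.toAlgHom_eq_coe, AlgHom.coe_coe, AlgEquiv.coe_toAlgHom]
      rw [show (X - C ((n:ℤ):ℂ)) ⊗ₜ[ℂ] (1:PC)
          = (X:PC) ⊗ₜ[ℂ] (1:PC) - (((n:ℤ):ℂ) • (1:PC)) ⊗ₜ[ℂ] (1:PC) by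
        rw [sub_tmul]; norm_num [Polynomial.smul_eq_C_mul]]
      rw [map_sub, EE_X_tmul_one, ← TensorProduct.smul_tmul', map_smul,
        show ((1:PC) ⊗ₜ[ℂ] (1:PC)) = (1:AA) from rfl, map_one, aeval_X,
        Algebra.smul_def, mul_one, Polynomial.algebraMap_apply, Polynomial.algebraMap_eq]
    · apply Polynomial.algHom_ext
      simp only [AlgHom.comp_apply, Algebra.TensorProduct.includeRight_apply,
        Algebra.TensorProduct.map_tmul, AlgHom.coe_id, id_eq,
        AlgHom.coe_restrictScalars', AlgEquiv.toAlgHom_eq_coe, AlgHom.coe_coe, AlgEquiv.coe_toAlgHom]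
      rw [map_one, EE_one_tmul]
      exact ((Polynomial.aeval_C _ _).trans rfl).symm
  have h2 := congrArg (fun (f : AA →ₐ[ℂ] Polynomial PC) => f x) key
  simp only [AlgHom.comp_apply] at h2
  rw [hΦ]
  rw [show ((Algebra.TensorProduct.map (Polynomial.aeval (X - C ((n:ℤ):ℂ))) (AlgHom.id ℂ PC)).toLinearMap x) = (Algebra.TensorProduct.map (Polynomial.aeval (X - C ((n:ℤ):ℂ))) (AlgHom.id ℂ PC)) x from rfl]
  rw [show EE ((Algebra.TensorProduct.map (Polynomial.aeval (X - C ((n:ℤ):ℂ))) (AlgHom.id ℂ PC)) x) = EE.toAlgHom ((Algebra.TensorProduct.map (Polynomial.aeval (X - C ((n:ℤ):ℂ))) (AlgHom.id ℂ PC)) x) from rfl]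
  rw [h2, Polynomial.comp_eq_aeval]
  rfl

lemma hom_mul (φ : AA →ₗ[ℂ] AA)
    (h1 : ∀ m, φ (((X:PC) ⊗ₜ[ℂ] (1:PC)) * m) = ((X:PC) ⊗ₜ[ℂ] (1:PC)) * φ m)
    (h2 : ∀ m, φ (((1:PC) ⊗ₜ[ℂ] (X:PC)) * m) = ((1:PC) ⊗ₜ[ℂ] (X:PC)) * φ m) :
    ∀ a m : AA, φ (a * m) = a * φ m := by
  set S : Subalgebra ℂ AA :=
    { carrier := {a | ∀ m, φ (a * m) = a * φ m}
      mul_mem' := by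
        intro a b ha hb m
        rw [mul_assoc, ha, hb, mul_assoc]
      one_mem' := by intro m; rw [one_mul, one_mul]
      add_mem' := by
        intro a b ha hb m
        rw [add_mul, add_mul, map_add, ha, hb]
      zero_mem' := by intro m; simp
      algebraMap_mem' := by
        intro c m
        rw [Algebra.algebraMap_eq_smul_one, smul_mul_assoc, one_mul, map_smul,
          smul_mul_assoc, one_mul] } with hS
  have hXl : ((X:PC) ⊗ₜ[ℂ] (1:PC)) ∈ S := h1
  have hXr : ((1:PC) ⊗ₜ[ℂ] (X:PC)) ∈ S := h2
  have hleft : ∀ f : PC, (f ⊗ₜ[ℂ] (1:PC)) ∈ S := by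
    intro f
    have hle : (Algebra.adjoin ℂ ({X} : Set PC)) ≤
        (S.comap (Algebra.TensorProduct.includeLeft : PC →ₐ[ℂ] AA)) := by
      rw [Algebra.adjoin_le_iff]
      intro x hx
      rcases hx with rfl
      exact hXl
    exact hle (by rw [Polynomial.adjoin_X]; trivial)
  have hright : ∀ g : PC, ((1:PC) ⊗ₜ[ℂ] g) ∈ S := by
    intro g
    have hle : (Algebra.adjoin ℂ ({X} : Set PC)) ≤
        (S.comap (Algebra.TensorProduct.includeRight : PC →ₐ[ℂ] AA)) := by
      rw [Algebra.adjoin_le_iff]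
      intro x hx
      rcases hx with rfl
      exact hXr
    exact hle (by rw [Polynomial.adjoin_X]; trivial)
  intro a
  induction a using TensorProduct.induction_on with
  | zero => intro m; simp
  | tmul f g =>
      have : f ⊗ₜ[ℂ] g = (f ⊗ₜ[ℂ] (1:PC)) * ((1:PC) ⊗ₜ[ℂ] g) := by
        rw [Algebra.TensorProduct.tmul_mul_tmul, mul_one, one_mul]
      rw [this]
      exact S.mul_mem (hleft f) (hright g)
  | add x y hx hy => exact S.add_mem hx hy

lemma whom_mul {lam1 lam2 alpha1 alpha2 : ℂ} {h1 h2 : Polynomial ℂ}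
    {φ : AA →ₗ[ℂ] AA}
    (hφ : WHom (omegaHRho lam1 alpha1 h1) (omegaHRho lam2 alpha2 h2) φ) :
    ∀ a : AA, φ a = a * φ 1 := by
  have k1 : ∀ m, φ (((X:PC) ⊗ₜ[ℂ] (1:PC)) * m) = ((X:PC) ⊗ₜ[ℂ] (1:PC)) * φ m := by
    intro m
    have h := hφ (.L 0) m
    rwa [omegaHRho_L_zero, omegaHRho_L_zero, LinearMap.mulLeft_apply,
      LinearMap.mulLeft_apply] at h
  have k2 : ∀ m, φ (((1:PC) ⊗ₜ[ℂ] (X:PC)) * m) = ((1:PC) ⊗ₜ[ℂ] (X:PC)) * φ m := by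
    intro m
    have h := hφ (.W 0) m
    rwa [omegaHRho_W_zero, omegaHRho_W_zero, LinearMap.mulLeft_apply,
      LinearMap.mulLeft_apply] at h
  intro a
  have h := hom_mul φ k1 k2 a 1
  rw [mul_one] at h
  rw [h, mul_comm]

lemma whom_W_eq {lam1 lam2 alpha1 alpha2 : ℂ} {h1 h2 : Polynomial ℂ}
    {φ : AA →ₗ[ℂ] AA}
    (hφ : WHom (omegaHRho lam1 alpha1 h1) (omegaHRho lam2 alpha2 h2) φ) (n : ℤ) :
    (lam1 ^ n) • (C (X - C ((n:ℂ) * alpha1)) * EE (φ 1))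
      = (lam2 ^ n) • (C (X - C ((n:ℂ) * alpha2)) * ((EE (φ 1)).comp (X - C (C ((n:ℂ)))))) := by
  have h := hφ (.W n) 1
  simp only [omegaHRho] at h
  rw [Algebra.TensorProduct.one_def, LinearMap.smul_apply, TensorProduct.map_tmul,
    shiftMap_one_eq, LinearMap.mulLeft_apply, mul_one, map_smul,
    whom_mul hφ, LinearMap.smul_apply, map_shift_mulLeft, LinearMap.comp_apply,
    LinearMap.mulLeft_apply] at h
  have h2 := congrArg EE h
  rw [map_smul, map_smul, map_mul EE, map_mul EE, EE_one_tmul, EE_one_tmul, EE_shift] at h2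
  exact h2

lemma EE_X_tmul (p : PC) : EE ((X:PC) ⊗ₜ[ℂ] p) = X * C p := by
  rw [show (X:PC) ⊗ₜ[ℂ] p = ((X:PC) ⊗ₜ[ℂ] (1:PC)) * ((1:PC) ⊗ₜ[ℂ] p) by
    rw [Algebra.TensorProduct.tmul_mul_tmul, mul_one, one_mul]]
  rw [map_mul EE, EE_X_tmul_one, EE_one_tmul]

lemma rhoL_one_p (lam alpha : ℂ) (h p : PC) (n : ℤ) :
    omegaHRho lam alpha h (.L n) ((1:PC) ⊗ₜ[ℂ] p)
      = lam^n • ((X:PC) ⊗ₜ[ℂ] p + ((n:ℤ):ℂ) • ((1:PC) ⊗ₜ[ℂ] (Gmap alpha h p))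
          - (((n:ℤ):ℂ)^2*alpha) • ((1:PC) ⊗ₜ[ℂ] (Fmap alpha h p))) := by
  simp only [omegaHRho, LinearMap.smul_apply, LinearMap.sub_apply, LinearMap.add_apply,
    TensorProduct.map_tmul, LinearMap.comp_apply, shiftMap_one_eq, LinearMap.mulLeft_apply,
    mul_one, LinearMap.id_apply]

lemma rhoL_one (lam alpha : ℂ) (h : PC) (n : ℤ) :
    omegaHRho lam alpha h (.L n) (1:AA)
      = lam^n • ((X:PC) ⊗ₜ[ℂ] (1:PC) + ((n:ℤ):ℂ) • ((1:PC) ⊗ₜ[ℂ] (Gmap alpha h 1))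
          - (((n:ℤ):ℂ)^2*alpha) • ((1:PC) ⊗ₜ[ℂ] (Fmap alpha h 1))) := by
  rw [show (1:AA) = (1:PC) ⊗ₜ[ℂ] (1:PC) from rfl, rhoL_one_p]

lemma whom_L_eq {lam1 lam2 alpha1 alpha2 : ℂ} {h1 h2 : Polynomial ℂ}
    {φ : AA →ₗ[ℂ] AA}
    (hφ : WHom (omegaHRho lam1 alpha1 h1) (omegaHRho lam2 alpha2 h2) φ)
    (p : PC) (hp : φ 1 = (1:PC) ⊗ₜ[ℂ] p) (n : ℤ) :
    (lam1 ^ n) • (X * C p + ((n:ℂ)) • C ((Gmap alpha1 h1 1) * p)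
        - ((n:ℂ)^2 * alpha1) • C ((Fmap alpha1 h1 1) * p))
      = (lam2 ^ n) • (X * C p + ((n:ℂ)) • C (Gmap alpha2 h2 p)
        - ((n:ℂ)^2 * alpha2) • C (Fmap alpha2 h2 p)) := by
  have h := hφ (.L n) 1
  rw [rhoL_one, hp, rhoL_one_p] at h
  rw [map_smul, map_sub, map_add, map_smul, map_smul,
    whom_mul hφ ((X:PC) ⊗ₜ[ℂ] (1:PC)), whom_mul hφ ((1:PC) ⊗ₜ[ℂ] (Gmap alpha1 h1 1)),
    whom_mul hφ ((1:PC) ⊗ₜ[ℂ] (Fmap alpha1 h1 1)), hp,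
    Algebra.TensorProduct.tmul_mul_tmul, Algebra.TensorProduct.tmul_mul_tmul,
    Algebra.TensorProduct.tmul_mul_tmul] at h
  simp only [mul_one, one_mul] at h
  have h2 := congrArg EE h
  rw [map_smul, map_smul, map_sub EE, map_sub EE, map_add EE, map_add EE,
    map_smul, map_smul, map_smul, map_smul, EE_X_tmul,
    EE_one_tmul, EE_one_tmul, EE_one_tmul, EE_one_tmul] at h2
  exact h2

lemma csmul (c : ℂ) (q : Polynomial PC) : c • q = C (C c) * q := by
  rw [Algebra.smul_def]
  congr 1

lemma gPoly_spec (alpha : ℂ) (h : PC) :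
    (X - C alpha) * gPoly alpha h = h - C (h.eval alpha) := by
  have hm := Polynomial.modByMonic_add_div (h - C (h.eval alpha)) (X - C alpha)
  rw [Polynomial.modByMonic_X_sub_C_eq_C_eval] at hm
  simp only [eval_sub, eval_C, sub_self, map_zero, zero_add] at hm
  exact hm

lemma Fmap_one (alpha : ℂ) (h : PC) : Fmap alpha h 1 = gPoly alpha h := by
  simp [Fmap]

lemma Gmap_one (alpha : ℂ) (h : PC) :
    Gmap alpha h 1 = X * gPoly alpha h + C (h.eval alpha) := by
  simp [Gmap, Fmap, Polynomial.smul_eq_C_mul]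

lemma Fmap_apply (alpha : ℂ) (h p : PC) :
    Fmap alpha h p = gPoly alpha h * p - derivative p := by
  simp [Fmap]

lemma Gmap_apply (alpha : ℂ) (h p : PC) :
    Gmap alpha h p = X * (gPoly alpha h * p - derivative p) + C (h.eval alpha) * p := by
  simp [Gmap, Fmap, Polynomial.smul_eq_C_mul]

lemma comp_X_sub_one_const (q : Polynomial PC)
    (hq : q.comp (X - C (C (1:ℂ))) = q) : q = C (q.eval 0) := by
  have key : ∀ m : ℕ, q.eval (-(m:PC)) = q.eval 0 := by
    intro m
    induction m with
    | zero => norm_num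
    | succ k ih =>
        have := congrArg (fun r => Polynomial.eval (-(k:PC)) r) hq
        simp only [Polynomial.eval_comp, Polynomial.eval_sub, Polynomial.eval_X,
          Polynomial.eval_C] at this
        rw [← ih, ← this]
        congr 1
        rw [Polynomial.C_1]
        push_cast
        ring
  have hroots : q - C (q.eval 0) = 0 := by
    apply Polynomial.eq_zero_of_infinite_isRoot
    apply Set.infinite_of_injective_forall_mem
      (f := fun m : ℕ => -((m:PC)))
    · intro a b hab
      have : ((a:PC)) = (b:PC) := by
        have := neg_injective hab
        exact_mod_cast this
      exact_mod_cast this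
    · intro m
      simp only [Set.mem_setOf_eq, Polynomial.IsRoot, Polynomial.eval_sub,
        Polynomial.eval_C, key m, sub_self]
  have := sub_eq_zero.mp hroots
  exact this

lemma analysis {lam1 lam2 alpha1 alpha2 : ℂ} {h1 h2 : Polynomial ℂ}
    (hl1 : lam1 ≠ 0) (hl2 : lam2 ≠ 0) (ha1 : alpha1 ≠ 0)
    {φ : AA →ₗ[ℂ] AA}
    (hφ : WHom (omegaHRho lam1 alpha1 h1) (omegaHRho lam2 alpha2 h2) φ)
    (hne : φ ≠ 0) :
    lam1 = lam2 ∧ alpha1 = alpha2 ∧ h1 = h2 ∧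
      ∃ c : ℂ, φ = c • (LinearMap.id : AA →ₗ[ℂ] AA) := by
  have hP0 : φ 1 ≠ 0 := by
    intro h0
    apply hne
    apply LinearMap.ext
    intro a
    rw [whom_mul hφ a, h0, mul_zero, LinearMap.zero_apply]
  set Q : Polynomial PC := EE (φ 1) with hQdef
  have hQ0 : Q ≠ 0 := by
    intro h0
    exact hP0 (EE.injective (h0.trans (map_zero EE).symm))
  have e1 := whom_W_eq hφ 1
  simp only [zpow_one, Int.cast_one, one_mul] at e1
  rw [csmul, csmul] at e1
  have hndc : (X - C (C (1:ℂ))).natDegree ≠ 0 := by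
    rw [Polynomial.natDegree_X_sub_C]; norm_num
  have hlcS : (Q.comp (X - C (C (1:ℂ)))).leadingCoeff = Q.leadingCoeff := by
    rw [Polynomial.leadingCoeff_comp hndc, Polynomial.leadingCoeff_X_sub_C, one_pow, mul_one]
  have hlc := congrArg Polynomial.leadingCoeff e1
  rw [Polynomial.leadingCoeff_mul, Polynomial.leadingCoeff_mul,
    Polynomial.leadingCoeff_mul, Polynomial.leadingCoeff_mul,
    hlcS, Polynomial.leadingCoeff_C, Polynomial.leadingCoeff_C, Polynomial.leadingCoeff_C,
    Polynomial.leadingCoeff_C] at hlc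
  have hQlc : Q.leadingCoeff ≠ 0 := Polynomial.leadingCoeff_ne_zero.mpr hQ0
  have hkey : C lam1 * (X - C alpha1) = C lam2 * (X - C alpha2) := by
    have h6 := hlc
    rw [← mul_assoc, ← mul_assoc] at h6
    exact mul_right_cancel₀ hQlc h6
  have hlam : lam1 = lam2 := by
    have hc1 := congrArg (fun q => Polynomial.coeff q 1) hkey
    simpa [Polynomial.coeff_C_mul, Polynomial.coeff_sub, Polynomial.coeff_X_one,
      Polynomial.coeff_C] using hc1
  subst hlam
  have halpha : alpha1 = alpha2 := by
    have hc0 := congrArg (fun q => Polynomial.coeff q 0) hkey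
    simp only [Polynomial.coeff_C_mul, Polynomial.coeff_sub, Polynomial.coeff_X_zero,
      Polynomial.coeff_C_zero, zero_sub, mul_neg, neg_inj] at hc0
    exact mul_left_cancel₀ hl1 hc0
  subst halpha
  refine ⟨rfl, rfl, ?_⟩
  have hCu : (C (C lam1) * C (X - C alpha1) : Polynomial PC) ≠ 0 := by
    apply mul_ne_zero
    · intro hz
      exact hl1 (by simpa using hz)
    · intro hz
      have h7 : (X - C alpha1 : PC) = 0 := Polynomial.C_injective (by simpa using hz)
      exact Polynomial.X_sub_C_ne_zero alpha1 h7
  have hQcomp : Q = Q.comp (X - C (C (1:ℂ))) := by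
    rw [← mul_assoc, ← mul_assoc] at e1
    exact mul_left_cancel₀ hCu e1
  have hQc : Q = C (Q.eval 0) := comp_X_sub_one_const Q hQcomp.symm
  set p : PC := Q.eval 0 with hpdef
  have hp0 : p ≠ 0 := by
    intro h0
    apply hQ0
    rw [hQc, h0, map_zero]
  have hPp : φ 1 = (1:PC) ⊗ₜ[ℂ] p := by
    apply EE.injective
    rw [EE_one_tmul, ← hQdef, hQc]
  have eP := whom_L_eq hφ p hPp 1
  have eM := whom_L_eq hφ p hPp (-1)
  simp only [zpow_one, Int.cast_one, one_pow, one_mul, one_smul] at eP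
  have eP' := smul_right_injective (Polynomial PC) hl1 eP
  simp only [zpow_neg_one, Int.cast_neg, Int.cast_one, neg_one_sq, one_mul] at eM
  have eM' := smul_right_injective (Polynomial PC) (inv_ne_zero hl1) eM
  have ePc : (Gmap alpha1 h1 1) * p - alpha1 • ((Fmap alpha1 h1 1) * p)
      = (Gmap alpha1 h2 p) - alpha1 • (Fmap alpha1 h2 p) := by
    have h8 := eP'
    rw [Polynomial.smul_C, Polynomial.smul_C, add_sub_assoc, add_sub_assoc,
      ← Polynomial.C_sub, ← Polynomial.C_sub] at h8
    exact Polynomial.C_injective (add_left_cancel h8)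
  have eMc : (-1:ℂ) • ((Gmap alpha1 h1 1) * p) - alpha1 • ((Fmap alpha1 h1 1) * p)
      = (-1:ℂ) • (Gmap alpha1 h2 p) - alpha1 • (Fmap alpha1 h2 p) := by
    have h9 := eM'
    rw [Polynomial.smul_C, Polynomial.smul_C, Polynomial.smul_C, Polynomial.smul_C,
      add_sub_assoc, add_sub_assoc, ← Polynomial.C_sub, ← Polynomial.C_sub] at h9
    exact Polynomial.C_injective (add_left_cancel h9)
  rw [neg_smul, one_smul, neg_smul, one_smul] at eMc
  rw [Polynomial.smul_eq_C_mul, Polynomial.smul_eq_C_mul] at ePc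
  rw [Polynomial.smul_eq_C_mul, Polynomial.smul_eq_C_mul] at eMc
  have hF2 : (2:PC) * (C alpha1 * ((Fmap alpha1 h1 1) * p))
      = (2:PC) * (C alpha1 * (Fmap alpha1 h2 p)) := by
    linear_combination (-1 : PC) * ePc - eMc
  have hFeq : (Fmap alpha1 h1 1) * p = Fmap alpha1 h2 p := by
    have h4 := mul_left_cancel₀ (by norm_num : (2:PC) ≠ 0) hF2
    exact mul_left_cancel₀ (fun hz => ha1 (by simpa using hz)) h4
  have hGeq : (Gmap alpha1 h1 1) * p = Gmap alpha1 h2 p := by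
    linear_combination ePc + C alpha1 * hFeq
  rw [Fmap_one, Fmap_apply] at hFeq
  rw [Gmap_one, Gmap_apply] at hGeq
  have hEval : h1.eval alpha1 = h2.eval alpha1 := by
    have h5 : C (h1.eval alpha1) * p = C (h2.eval alpha1) * p := by
      linear_combination hGeq - X * hFeq
    exact Polynomial.C_injective (mul_right_cancel₀ hp0 h5)
  have hdp : derivative p = (gPoly alpha1 h2 - gPoly alpha1 h1) * p := by
    linear_combination hFeq
  have hgg : gPoly alpha1 h1 = gPoly alpha1 h2 := by
    by_contra hd
    have hdne : gPoly alpha1 h2 - gPoly alpha1 h1 ≠ 0 :=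
      sub_ne_zero_of_ne (fun h => hd h.symm)
    have hp' : derivative p ≠ 0 := by
      rw [hdp]; exact mul_ne_zero hdne hp0
    have hnd : p.natDegree ≠ 0 := by
      intro h0
      apply hp'
      rw [Polynomial.eq_C_of_natDegree_eq_zero h0]
      simp
    have hlt := Polynomial.natDegree_derivative_lt hnd
    rw [hdp, Polynomial.natDegree_mul hdne hp0] at hlt
    omega
  have hder : derivative p = 0 := by
    rw [hdp, hgg, sub_self, zero_mul]
  have hh12 : h1 = h2 := by
    have k1 := gPoly_spec alpha1 h1
    have k2 := gPoly_spec alpha1 h2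
    have hEvalC : C (h1.eval alpha1) = C (h2.eval alpha1) := by rw [hEval]
    linear_combination k2 - k1 + (X - C alpha1) * hgg + hEvalC
  have hnd0 : p.natDegree = 0 := Polynomial.natDegree_eq_zero_of_derivative_eq_zero hder
  have hc : p = C (p.coeff 0) := Polynomial.eq_C_of_natDegree_eq_zero hnd0
  refine ⟨hh12, p.coeff 0, ?_⟩
  apply LinearMap.ext
  intro a
  have hone : (1:PC) ⊗ₜ[ℂ] p = (p.coeff 0) • (1:AA) :=
    calc (1:PC) ⊗ₜ[ℂ] p = (1:PC) ⊗ₜ[ℂ] (C (p.coeff 0)) := by rw [← hc]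
      _ = (1:PC) ⊗ₜ[ℂ] ((p.coeff 0) • (1:PC)) := by
            rw [Polynomial.smul_eq_C_mul, mul_one]
      _ = (p.coeff 0) • ((1:PC) ⊗ₜ[ℂ] (1:PC)) := TensorProduct.tmul_smul _ _ _
      _ = (p.coeff 0) • (1:AA) := rfl
  rw [LinearMap.smul_apply, LinearMap.id_apply, whom_mul hφ a, hPp, hone,
    mul_smul_comm, mul_one]

end
/-- For αᵢ ∈ ℂ*: there is a nonzero W(2,2)-module homomorphism
Ω(λ₁,α₁,h₁) → Ω(λ₂,α₂,h₂) iff λ₁ = λ₂, α₁ = α₂ and h₁ = h₂; and in that case every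
homomorphism is a scalar multiple of the identity. -/
theorem omegaH_hom_classification (lam1 lam2 alpha1 alpha2 : ℂ) (h1 h2 : Polynomial ℂ)
    (hl1 : lam1 ≠ 0) (hl2 : lam2 ≠ 0) (ha1 : alpha1 ≠ 0) (ha2 : alpha2 ≠ 0) :
    ((∃ φ : TensorProduct ℂ (Polynomial ℂ) (Polynomial ℂ) →ₗ[ℂ]
          TensorProduct ℂ (Polynomial ℂ) (Polynomial ℂ),
        WHom (omegaHRho lam1 alpha1 h1) (omegaHRho lam2 alpha2 h2) φ ∧ φ ≠ 0)
      ↔ (lam1 = lam2 ∧ alpha1 = alpha2 ∧ h1 = h2)) ∧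
    (lam1 = lam2 → alpha1 = alpha2 → h1 = h2 →
      ∀ φ : TensorProduct ℂ (Polynomial ℂ) (Polynomial ℂ) →ₗ[ℂ]
          TensorProduct ℂ (Polynomial ℂ) (Polynomial ℂ),
        WHom (omegaHRho lam1 alpha1 h1) (omegaHRho lam2 alpha2 h2) φ →
        ∃ c : ℂ, φ = c • (LinearMap.id : TensorProduct ℂ (Polynomial ℂ) (Polynomial ℂ) →ₗ[ℂ]
          TensorProduct ℂ (Polynomial ℂ) (Polynomial ℂ))) := by
  constructor
  · constructor
    · rintro ⟨φ, hφ, hne⟩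
      obtain ⟨e1, e2, e3, _⟩ := analysis hl1 hl2 ha1 hφ hne
      exact ⟨e1, e2, e3⟩
    · rintro ⟨rfl, rfl, rfl⟩
      refine ⟨LinearMap.id, fun b x => rfl, ?_⟩
      intro h0
      have h1ne : (1:AA) ≠ 0 := fun h =>
        one_ne_zero (α := Polynomial PC) (by rw [← map_one EE, h, map_zero])
      exact h1ne (congrArg (fun ψ => ψ (1:AA)) h0)
  · rintro rfl rfl rfl φ hφ
    by_cases hne : φ = 0
    · exact ⟨0, by rw [hne, zero_smul]⟩
    · exact (analysis hl1 hl2 ha1 hφ hne).2.2.2
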